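/- Let C be the category freely generated by a finite acyclic directed graph. Then C satisfies: for every span (i, j) (pair of morphisms with common domain), any two maximal spans for (i, j) are equal. (A span (ĩ, j̃) is a maximal span for (i, j) if there is a morphism k with i = ĩ ∘ k, j = j̃ ∘ k, and no non-identity morphism k' and span (i', j') satisfy ĩ = i' ∘ k', j̃ = j' ∘ k'.) -/

import Mathlib

open CategoryTheory

universe v u

section Spans

variable {C : Type u} [Category.{v} C]

/-- A span `(i, j)` with apex `d` is maximal if it admits no non-trivial common factorization:
whenever `i = k ≫ i'` and `j = k ≫ j'`, the morphism `k` is an identity (up to `eqToHom`). -/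
def IsMaxSpan {d a b : C} (i : d ⟶ a) (j : d ⟶ b) : Prop :=
  ∀ {d' : C} (k : d ⟶ d') (i' : d' ⟶ a) (j' : d' ⟶ b),
    i = k ≫ i' → j = k ≫ j' → ∃ h : d' = d, k = eqToHom h.symm

/-- `(ĩ, j̃)` is a maximal span for `(i, j)` if it is maximal and `(i, j)` factors through it
by a common morphism. -/
def IsMaxSpanFor {d a b : C} (i : d ⟶ a) (j : d ⟶ b) {e : C} (ti : e ⟶ a) (tj : e ⟶ b) : Prop :=
  IsMaxSpan ti tj ∧ ∃ k : d ⟶ e, i = k ≫ ti ∧ j = k ≫ tj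

end Spans



lemma path_split {V : Type u} [Quiver.{v + 1} V] {x y z : V}
    (p : Quiver.Path x y) (q : Quiver.Path y z) :
    ∀ {y' : V} (p' : Quiver.Path x y') (q' : Quiver.Path y' z),
      p.comp q = p'.comp q' → p.length ≤ p'.length →
      ∃ m : Quiver.Path y y', p' = p.comp m ∧ q = m.comp q' := by
  induction q with
  | nil =>
    intro y' p' q' h hl
    have hlen : p.length = p'.length + q'.length := by
      simpa using congrArg Quiver.Path.length h
    have hq0 : q'.length = 0 := by omega
    have hy : y' = y := q'.eq_of_length_zero hq0
    subst hy
    obtain rfl := q'.eq_nil_of_length_zero hq0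
    simp only [Quiver.Path.comp_nil] at h
    exact ⟨Quiver.Path.nil, by simp [h], by simp⟩
  | cons q₀ f ih =>
    intro y' p' q' h hl
    cases q' with
    | nil =>
      simp only [Quiver.Path.comp_nil, Quiver.Path.comp_cons] at h
      exact ⟨q₀.cons f, h.symm, by simp⟩
    | cons q₀' f' =>
      simp only [Quiver.Path.comp_cons] at h
      obtain rfl := Quiver.Path.obj_eq_of_cons_eq_cons h
      have h1 : p.comp q₀ = p'.comp q₀' := eq_of_heq (Quiver.Path.heq_of_cons_eq_cons h)
      have h2 : f = f' := eq_of_heq (Quiver.Path.hom_heq_of_cons_eq_cons h)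
      obtain ⟨m, hm1, hm2⟩ := ih p' q₀' h1 hl
      subst h2
      exact ⟨m, hm1, by simp [Quiver.Path.comp_cons, hm2]⟩

lemma aux_max {V : Type u} [Quiver.{v + 1} V]
    {d a b : Paths V} {e₁ e₂ : Paths V}
    {i₁ : e₁ ⟶ a} {j₁ : e₁ ⟶ b} {i₂ : e₂ ⟶ a} {j₂ : e₂ ⟶ b}
    (max₁ : IsMaxSpan i₁ j₁)
    {k₁ : d ⟶ e₁} {k₂ : d ⟶ e₂}
    (hi : k₁ ≫ i₁ = k₂ ≫ i₂) (hj : k₁ ≫ j₁ = k₂ ≫ j₂)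
    (hl : Quiver.Path.length (V := V) k₁ ≤ Quiver.Path.length (V := V) k₂) :
    e₁ = e₂ ∧ HEq i₁ i₂ ∧ HEq j₁ j₂ := by
  obtain ⟨m, hm1, hm2⟩ := path_split k₁ i₁ k₂ i₂ hi hl
  obtain ⟨m', hm1', hm2'⟩ := path_split k₁ j₁ k₂ j₂ hj hl
  have hmm : m = m' := Quiver.Path.comp_injective_right (V := V) k₁ (hm1 ▸ hm1')
  subst hmm
  obtain ⟨h, hk⟩ := max₁ (m : e₁ ⟶ e₂) i₂ j₂ hm2 hm2'
  subst h
  simp only [eqToHom_refl] at hk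
  subst hk
  have h1 : i₁ = i₂ := hm2.trans (Quiver.Path.nil_comp _)
  have h2 : j₁ = j₂ := hm2'.trans (Quiver.Path.nil_comp _)
  exact ⟨rfl, heq_of_eq h1, heq_of_eq h2⟩

/-- In the category freely generated by a finite acyclic directed graph
(a path category of a finite quiver with no nontrivial directed cycles), any two maximal spans
for a given span coincide. -/
theorem statement17 {V : Type u} [Quiver.{v + 1} V] [Fintype V]
    [∀ a b : V, Fintype (a ⟶ b)]
    (acyclic : ∀ (a : V) (p : Quiver.Path a a), p = Quiver.Path.nil)
    {d a b : Paths V} (i : d ⟶ a) (j : d ⟶ b)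
    {e₁ e₂ : Paths V} (i₁ : e₁ ⟶ a) (j₁ : e₁ ⟶ b) (i₂ : e₂ ⟶ a) (j₂ : e₂ ⟶ b)
    (h₁ : IsMaxSpanFor i j i₁ j₁) (h₂ : IsMaxSpanFor i j i₂ j₂) :
    e₁ = e₂ ∧ HEq i₁ i₂ ∧ HEq j₁ j₂ := by
  
  obtain ⟨max₁, k₁, hi₁, hj₁⟩ := h₁
  obtain ⟨max₂, k₂, hi₂, hj₂⟩ := h₂
  have hi : k₁ ≫ i₁ = k₂ ≫ i₂ := hi₁.symm.trans hi₂
  have hj : k₁ ≫ j₁ = k₂ ≫ j₂ := hj₁.symm.trans hj₂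
  rcases le_total (Quiver.Path.length (V := V) k₁) (Quiver.Path.length (V := V) k₂) with hl | hl
  · exact aux_max max₁ hi hj hl
  · obtain ⟨h, h1, h2⟩ := aux_max max₂ hi.symm hj.symm hl
    exact ⟨h.symm, h1.symm, h2.symm⟩
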